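/- For every (x,y) ∈ ℤ², the G-orbit of (x,y) is periodic: there exists n ≥ 1 with Gⁿ((x,y)) = (x,y). -/
import Mathlib


def G (p : ℤ × ℤ) : ℤ × ℤ :=
  if p.2 ≤ 0 then (p.2, -p.1 - 2 * p.2) else (p.2, -p.1 - 2 * p.2 + 1)

/-- Inverse of `G`. -/
def H (p : ℤ × ℤ) : ℤ × ℤ :=
  if 0 < p.1 then (-2 * p.1 - p.2 + 1, p.1) else (-2 * p.1 - p.2, p.1)

lemma G_le (p : ℤ × ℤ) (h : p.2 ≤ 0) : G p = (p.2, -p.1 - 2 * p.2) := if_pos h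

lemma G_pos (p : ℤ × ℤ) (h : 0 < p.2) : G p = (p.2, -p.1 - 2 * p.2 + 1) :=
  if_neg (by omega)

lemma HG : Function.LeftInverse H G := by
  rintro ⟨x, y⟩
  by_cases h : y ≤ 0
  · rw [G_le _ h]
    simp only [H]
    rw [if_neg (by simpa using h)]
    simp; ring
  · rw [G_pos _ (by omega)]
    simp only [H]
    rw [if_pos (by omega)]
    simp; ring

lemma GRH (p : ℤ × ℤ) : G (p.2, p.1) = ((H p).2, (H p).1) := by
  obtain ⟨x, y⟩ := p
  by_cases h : x ≤ 0
  · rw [G_le _ (by simpa using h)]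
    simp only [H]
    rw [if_neg (by simpa using h)]
    simp; ring
  · rw [G_pos _ (by simp; omega)]
    simp only [H]
    rw [if_pos (by omega)]
    simp; ring

/-- `p` eventually reaches the anti-diagonal set `D = {(t,-t) : t ≥ 0}`. -/
def Reach (p : ℤ × ℤ) : Prop :=
  ∃ k : ℕ, (G^[k] p).1 + (G^[k] p).2 = 0 ∧ (G^[k] p).2 ≤ 0

lemma reachG {p : ℤ × ℤ} (h : Reach (G p)) : Reach p := by
  obtain ⟨k, h1, h2⟩ := h
  exact ⟨k + 1, by rwa [Function.iterate_succ_apply], by rwa [Function.iterate_succ_apply]⟩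

/-- Descent lemma: states with `x + y = n+1 ≥ 1` and `y ≥ 1` reach `D`. -/
lemma lemP : ∀ n : ℕ, ∀ p : ℤ × ℤ, p.1 + p.2 = (n : ℤ) + 1 → 1 ≤ p.2 → Reach p := by
  intro n
  induction n with
  | zero =>
    intro ⟨x, y⟩ hs hy
    simp at hs hy
    refine ⟨1, ?_, ?_⟩ <;>
      · simp only [Function.iterate_one]
        rw [G_pos _ (by simpa using (by omega : (0:ℤ) < y))]
        simp; omega
  | succ m ih =>
    intro ⟨x, y⟩ hs hy
    simp at hs hy
    apply reachG; apply reachG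
    have h1 : G (x, y) = (y, -x - 2 * y + 1) := G_pos _ (by simpa using (by omega : (0:ℤ) < y))
    rw [h1]
    have h2 : G (y, -x - 2 * y + 1) = (-x - 2 * y + 1, -y - 2 * (-x - 2 * y + 1)) :=
      G_le _ (by simp; omega)
    rw [h2]
    exact ih _ (by simp; ring_nf; omega) (by simp; omega)

lemma lemP' (p : ℤ × ℤ) (hs : 1 ≤ p.1 + p.2) (hy : 1 ≤ p.2) : Reach p := by
  refine lemP (p.1 + p.2 - 1).toNat p ?_ hy
  rw [Int.toNat_of_nonneg (by omega)]; omega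

/-- Ascent lemma: states with `x + y ≤ -1` and `y ≥ 1` reach `D`. -/
lemma lemA : ∀ n : ℕ, ∀ p : ℤ × ℤ, p.2.toNat ≤ n → p.1 + p.2 ≤ -1 → 1 ≤ p.2 → Reach p := by
  intro n
  induction n with
  | zero => intro ⟨x, y⟩ hn hs hy; simp at *; omega
  | succ m ih =>
    intro ⟨x, y⟩ hn hs hy
    simp only at hn hs hy
    have h1 : G (x, y) = (y, -x - 2 * y + 1) := G_pos _ (by simpa using (by omega : (0:ℤ) < y))
    by_cases hc : y ≤ -(x + y)
    · -- lands in P-class after one step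
      apply reachG
      rw [h1]
      exact lemP' _ (by simp; omega) (by simp; omega)
    · -- second step
      have h2 : G (y, -x - 2 * y + 1) = (-x - 2 * y + 1, -y - 2 * (-x - 2 * y + 1)) :=
        G_le _ (by simp; omega)
      by_cases hd : -y - 2 * (-x - 2 * y + 1) ≤ 0
      · -- third step lands in P-class
        apply reachG; apply reachG; apply reachG
        rw [h1, h2]
        have h3 : G (-x - 2 * y + 1, -y - 2 * (-x - 2 * y + 1)) =
            (-y - 2 * (-x - 2 * y + 1),
              -(-x - 2 * y + 1) - 2 * (-y - 2 * (-x - 2 * y + 1))) :=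
          G_le _ (by simpa using hd)
        rw [h3]
        exact lemP' _ (by simp; omega) (by simp; omega)
      · -- still ascending: second coordinate strictly decreased
        apply reachG; apply reachG
        rw [h1, h2]
        exact ih _ (by simp; omega) (by simp; omega) (by simp; omega)

lemma lemA' (p : ℤ × ℤ) (hs : p.1 + p.2 ≤ -1) (hy : 1 ≤ p.2) : Reach p :=
  lemA p.2.toNat p le_rfl hs hy

/-- B-class: `x + y ≥ 1`, `y ≤ 0`. -/
lemma lemB (p : ℤ × ℤ) (hs : 1 ≤ p.1 + p.2) (hy : p.2 ≤ 0) : Reach p := by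
  obtain ⟨x, y⟩ := p
  simp only at hs hy
  have h1 : G (x, y) = (y, -x - 2 * y) := G_le _ hy
  by_cases hc : -x - 2 * y ≤ 0
  · apply reachG; apply reachG
    rw [h1]
    have h2 : G (y, -x - 2 * y) = (-x - 2 * y, -y - 2 * (-x - 2 * y)) := G_le _ (by simpa using hc)
    rw [h2]
    exact lemP' _ (by simp; omega) (by simp; omega)
  · apply reachG
    rw [h1]
    exact lemA' _ (by simp; omega) (by simp; omega)

/-- Every point reaches `D`. -/
lemma reach_all (p : ℤ × ℤ) : Reach p := by
  obtain ⟨x, y⟩ := p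
  rcases lt_trichotomy (x + y) 0 with hs | hs | hs
  · by_cases hy : y ≤ 0
    · apply reachG
      rw [G_le _ hy]
      exact lemP' _ (by simp; omega) (by simp; omega)
    · exact lemA' _ (by simp; omega) (by simp; omega)
  · by_cases hy : y ≤ 0
    · exact ⟨0, by simpa using hs, by simpa using hy⟩
    · apply reachG
      rw [G_pos _ (by simpa using (by omega : (0:ℤ) < y))]
      exact lemB _ (by simp; omega) (by simp; omega)
  · by_cases hy : y ≤ 0
    · exact lemB _ (by simp; omega) (by simpa using hy)
    · exact lemP' _ (by simp; omega) (by simp; omega)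

/-- On `D`, applying `G` is the swap. -/
lemma G_swap (q : ℤ × ℤ) (h1 : q.1 + q.2 = 0) (h2 : q.2 ≤ 0) : G q = (q.2, q.1) := by
  rw [G_le _ h2]
  simp only [Prod.mk.injEq, true_and]
  omega

/-- Symmetry of the orbit around a `D`-point. -/
lemma symm_iter (q : ℤ × ℤ) (hq : G q = (q.2, q.1)) :
    ∀ m : ℕ, G^[m] (G q) = ((H^[m] q).2, (H^[m] q).1) := by
  intro m
  induction m with
  | zero => simpa using hq
  | succ k ihk =>
    rw [Function.iterate_succ_apply', ihk, GRH, Function.iterate_succ_apply' H k q]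

theorem stmt10 (p : ℤ × ℤ) : ∃ n : ℕ, 1 ≤ n ∧ G^[n] p = p := by
  obtain ⟨a, ha1, ha2⟩ := reach_all p
  obtain ⟨j, hj1, hj2⟩ := reach_all (G^[a + 1] p)
  set qa := G^[a] p with hqa
  set d : ℕ := j + 1 with hd
  set qb := G^[j] (G^[a + 1] p) with hqb
  have hGa : G qa = (qa.2, qa.1) := G_swap _ ha1 ha2
  have hGb : G qb = (qb.2, qb.1) := G_swap _ hj1 hj2
  -- q_b = G^[d] q_a
  have hab : qb = G^[d] qa := by
    rw [hqb, hqa, ← Function.iterate_add_apply G j (a + 1) p,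
      ← Function.iterate_add_apply G d a p]
    congr 1
    omega
  -- G^[d] (G qb) = G qa
  have key : G^[d] (G qb) = G qa := by
    rw [symm_iter qb hGb d, hab, HG.iterate d, hGa]
  -- rewrite both sides as iterates from p
  have key2 : G^[2 * d + (a + 1)] p = G^[a + 1] p := by
    have lhs : G^[d] (G qb) = G^[2 * d + (a + 1)] p := by
      rw [hqb, ← Function.iterate_succ_apply' G j (G^[a + 1] p),
        ← Function.iterate_add_apply G d (j + 1) (G^[a + 1] p),
        ← Function.iterate_add_apply G (d + (j + 1)) (a + 1) p]
      congr 1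
      omega
    rw [lhs] at key
    rw [key, hqa, ← Function.iterate_succ_apply' G a p]
  have key3 : G^[a + 1] (G^[2 * d] p) = G^[a + 1] p := by
    rw [← Function.iterate_add_apply G (a + 1) (2 * d) p,
      show a + 1 + 2 * d = 2 * d + (a + 1) by omega]
    exact key2
  have := congrArg (H^[a + 1]) key3
  rw [HG.iterate (a + 1), HG.iterate (a + 1)] at this
  exact ⟨2 * d, by omega, this⟩
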